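/- Let m ≥ 1 and let W₀ be an ℝ-submodule of Fin m → ℍ which is totally quaternionic, i.e. for every v ∈ W₀ and every quaternion q ∈ ℍ the componentwise right multiple (fun ℓ => v_ℓ · q) lies in W₀. Then for all v, w, u ∈ W₀ there exists α ∈ W₀ such that ⁅⁅M(v), M(w)⁆, M(u)⁆ = M(α); in other words, the image of W₀ under M is a Lie triple system. -/

import Mathlib

open Quaternion Matrix

/-- For `v : Fin m → ℍ`, the `(m+1)×(m+1)` quaternion matrix with `v_ℓ` in the
`(ℓ, m+1)` entry, `conj(v_ℓ)` in the `(m+1, ℓ)` entry, and zeros elsewhere. -/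
noncomputable def Mmat (m : ℕ) (v : Fin m → ℍ[ℝ]) :
    Matrix (Fin (m + 1)) (Fin (m + 1)) ℍ[ℝ] :=
  Matrix.of fun i j =>
    if hi : (i : ℕ) < m then
      if (j : ℕ) = m then v ⟨i, hi⟩ else 0
    else
      if hj : (j : ℕ) < m then star (v ⟨j, hj⟩) else 0

/-- A totally quaternionic real subspace `W₀ ⊆ ℍ^m` (i.e. `W₀q ⊆ W₀` for all `q ∈ ℍ`)
gives a Lie triple system: `[[M(v),M(w)],M(u)] = M(α)` for some `α ∈ W₀`. -/
theorem stmt5 (m : ℕ) (hm : 1 ≤ m) (W₀ : Submodule ℝ (Fin m → ℍ[ℝ]))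
    (hq : ∀ v ∈ W₀, ∀ q : ℍ[ℝ], (fun ℓ => v ℓ * q) ∈ W₀) :
    ∀ v ∈ W₀, ∀ w ∈ W₀, ∀ u ∈ W₀, ∃ α ∈ W₀,
      ⁅⁅Mmat m v, Mmat m w⁆, Mmat m u⁆ = Mmat m α := by
  intro v hv w hw u hu
  set A := ∑ ℓ, star (w ℓ) * u ℓ with hA
  set B := ∑ ℓ, star (v ℓ) * u ℓ with hB
  set C := ∑ ℓ, (star (v ℓ) * w ℓ - star (w ℓ) * v ℓ) with hC
  refine ⟨(fun ℓ => v ℓ * A) - (fun ℓ => w ℓ * B) - (fun ℓ => u ℓ * C),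
    W₀.sub_mem (W₀.sub_mem (hq v hv A) (hq w hw B)) (hq u hu C), ?_⟩
  have hne : ∀ x : Fin m, ((x : ℕ) = m) = False := fun x => by simp [x.isLt.ne]
  apply Matrix.ext
  intro i j
  simp only [Ring.lie_def, Matrix.sub_apply, Matrix.mul_apply, Mmat, Matrix.of_apply,
    Fin.sum_univ_castSucc, Fin.coe_castSucc, Fin.is_lt, dite_true, Fin.val_last,
    lt_irrefl, dite_false, Pi.sub_apply, hne, if_false]
  by_cases hi : (i : ℕ) < m <;> by_cases hj : (j : ℕ) < m
  · simp [hi, hj, hj.ne]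
  · have hj' : (j : ℕ) = m := by omega
    simp only [hi, hj, hj', dite_true, dite_false, if_true, hA, hB, hC, Fin.eta,
      zero_mul, mul_zero, add_zero, zero_add, Finset.sum_const_zero, lt_irrefl,
      Finset.mul_sum, Finset.sum_sub_distrib, sub_mul, mul_assoc, mul_sub]
    abel
  · have hi' : (i : ℕ) = m := by omega
    simp only [hi, hj, dite_true, dite_false, hA, hB, hC, star_sum, StarMul.star_mul,
      star_sub, star_star, Fin.eta, zero_mul, mul_zero, add_zero, zero_add,
      Finset.sum_const_zero, lt_irrefl, Finset.sum_mul, Finset.sum_sub_distrib, sub_mul,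
      mul_sub, mul_assoc]
    abel_nf; ac_rfl
  · simp [hi, hj]
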